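/- Fix p : ℤ and assume the Laplacian Δ is surjective in degrees p+1 and p+2 (i.e. Δ (p+1) and Δ (p+2) are surjective). Suppose W is a subspace of V p with W ⊆ ker (d p) ∩ ker (δ p) and with ker (δ p) = W ⊕ range (δ (p+1)) as an internal direct sum. Then the p-th cohomology of the subcomplex of harmonic elements with differential δ, namely the quotient (ker (δ p) ∩ ker (Δ p)) / (image under δ (p+1) of ker (Δ (p+1))), is linearly isomorphic to the product W × (ker (δ (p+1)) / range (δ (p+2))). (This is the abstract form of Remark 1: the δ-cohomology of harmonic forms in degree p is the relative cohomology in degree p plus an echo of the relative cohomology in degree p+1.) -/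

import Mathlib

/-- Transport along an equality of indices, as a linear map (the identity map). -/
def lcast (V : ℤ → Type*) [∀ p, AddCommGroup (V p)] [∀ p, Module ℝ (V p)]
    {p q : ℤ} (h : p = q) : V p →ₗ[ℝ] V q := by
  subst h; exact LinearMap.id

/-- The differential `d (p-1)`, regarded as a linear map into `V p`. -/
def dTo (V : ℤ → Type*) [∀ p, AddCommGroup (V p)] [∀ p, Module ℝ (V p)]
    (d : ∀ p : ℤ, V p →ₗ[ℝ] V (p + 1)) (p : ℤ) : V (p - 1) →ₗ[ℝ] V p :=
  (lcast V (by omega)).comp (d (p - 1))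

/-- The codifferential `δ (p+1)`, regarded as a linear map into `V p`. -/
def deltaTo (V : ℤ → Type*) [∀ p, AddCommGroup (V p)] [∀ p, Module ℝ (V p)]
    (δ : ∀ p : ℤ, V p →ₗ[ℝ] V (p - 1)) (p : ℤ) : V (p + 1) →ₗ[ℝ] V p :=
  (lcast V (by omega)).comp (δ (p + 1))

/-- The Laplacian `Δ p = d (p-1) ∘ δ p + δ (p+1) ∘ d p : V p →ₗ[ℝ] V p`. -/
def Lap (V : ℤ → Type*) [∀ p, AddCommGroup (V p)] [∀ p, Module ℝ (V p)]
    (d : ∀ p : ℤ, V p →ₗ[ℝ] V (p + 1)) (δ : ∀ p : ℤ, V p →ₗ[ℝ] V (p - 1))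
    (p : ℤ) : V p →ₗ[ℝ] V p :=
  ((dTo V d p).comp (δ p)) + ((deltaTo V δ p).comp (d p))

section Helpers

variable {V : ℤ → Type*} [∀ p, AddCommGroup (V p)] [∀ p, Module ℝ (V p)]

lemma lcast_refl {a : ℤ} (h : a = a) (x : V a) : lcast V h x = x := rfl

lemma lcast_lcast {a b c : ℤ} (h1 : a = b) (h2 : b = c) (x : V a) :
    lcast V h2 (lcast V h1 x) = lcast V (h1.trans h2) x := by subst h1; subst h2; rfl

lemma lcast_eq_zero_iff {a b : ℤ} (h : a = b) (x : V a) :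
    lcast V h x = 0 ↔ x = 0 := by subst h; exact Iff.rfl

variable {δ : ∀ p : ℤ, V p →ₗ[ℝ] V (p - 1)} {d : ∀ p : ℤ, V p →ₗ[ℝ] V (p + 1)}

lemma delta_lcast {a b : ℤ} (h : a = b) (x : V a) :
    δ b (lcast V h x) = lcast V (by rw [h]) (δ a x) := by subst h; rfl

lemma d_lcast {a b : ℤ} (h : a = b) (x : V a) :
    d b (lcast V h x) = lcast V (by rw [h]) (d a x) := by subst h; rfl

lemma lcast_lap {a b : ℤ} (h : a = b) (x : V a) :
    lcast V h (Lap V d δ a x) = Lap V d δ b (lcast V h x) := by subst h; rfl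

lemma deltaTo_apply (q : ℤ) (y : V (q + 1)) :
    deltaTo V δ q y = lcast V (by omega) (δ (q + 1) y) := rfl

lemma delta_deltaTo (hδ : ∀ p : ℤ, (δ (p - 1)).comp (δ p) = 0) (q : ℤ) (y : V (q + 1)) :
    δ q (deltaTo V δ q y) = 0 := by
  have h0 : δ (q + 1 - 1) (δ (q + 1) y) = 0 := LinearMap.ext_iff.mp (hδ (q + 1)) y
  simp only [deltaTo, LinearMap.comp_apply, delta_lcast, h0, map_zero]

lemma deltaTo_deltaTo (hδ : ∀ p : ℤ, (δ (p - 1)).comp (δ p) = 0) (q : ℤ) (y : V (q + 1 + 1)) :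
    deltaTo V δ q (deltaTo V δ (q + 1) y) = 0 := by
  rw [deltaTo_apply q, delta_deltaTo hδ (q + 1) y, map_zero]

lemma d_deltaTo (q : ℤ) (y : V (q + 1)) :
    d q (deltaTo V δ q y) = dTo V d (q + 1) (δ (q + 1) y) := by
  simp only [deltaTo, dTo, LinearMap.comp_apply, d_lcast]

lemma lap_apply' (q : ℤ) (x : V q) :
    Lap V d δ q x = dTo V d q (δ q x) + deltaTo V δ q (d q x) := rfl

lemma lap_eq_lcast (q : ℤ) (x : V q) (h1 : δ q x = 0) :
    Lap V d δ q x = lcast V (by omega) (δ (q + 1) (d q x)) := by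
  simp only [Lap, dTo, deltaTo, LinearMap.add_apply, LinearMap.comp_apply, h1, map_zero, zero_add]

lemma lap_eq_zero_iff_of_delta (q : ℤ) (x : V q) (h1 : δ q x = 0) :
    Lap V d δ q x = 0 ↔ δ (q + 1) (d q x) = 0 := by
  rw [lap_eq_lcast q x h1, lcast_eq_zero_iff]

lemma deltaTo_lap_comm (hδ : ∀ p : ℤ, (δ (p - 1)).comp (δ p) = 0) (q : ℤ) (x : V (q + 1)) :
    deltaTo V δ q (Lap V d δ (q + 1) x) = Lap V d δ q (deltaTo V δ q x) := by
  have h1 : δ (q + 1 - 1) (δ (q + 1) x) = 0 := LinearMap.ext_iff.mp (hδ (q + 1)) x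
  have h2 : δ (q + 1 + 1 - 1) (δ (q + 1 + 1) (d (q + 1) x)) = 0 :=
    LinearMap.ext_iff.mp (hδ (q + 1 + 1)) _
  simp only [Lap, dTo, deltaTo, LinearMap.add_apply, LinearMap.comp_apply, map_add,
    delta_lcast, d_lcast, lcast_lcast, h1, h2, map_zero, add_zero, zero_add]

end Helpers

/-- **Remark 1 (abstract form).**  If the Laplacian is surjective in degrees `p+1` and
`p+2`, and `W ⊆ ker (d p) ∩ ker (δ p)` is a subspace with `ker (δ p) = W ⊕ range (δ (p+1))`,
then the `p`-th cohomology of the complex of harmonic elements with differential `δ`,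
`(ker (δ p) ∩ ker (Δ p)) / δ (p+1) (ker (Δ (p+1)))`, is linearly isomorphic to
`W × (ker (δ (p+1)) / range (δ (p+2)))`. -/
theorem harmonic_delta_cohomology_iso
    (V : ℤ → Type*) [∀ p, AddCommGroup (V p)] [∀ p, Module ℝ (V p)]
    (d : ∀ p : ℤ, V p →ₗ[ℝ] V (p + 1)) (δ : ∀ p : ℤ, V p →ₗ[ℝ] V (p - 1))
    (hd : ∀ p : ℤ, (d (p + 1)).comp (d p) = 0)
    (hδ : ∀ p : ℤ, (δ (p - 1)).comp (δ p) = 0)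
    (p : ℤ)
    (hΔ1 : Function.Surjective (Lap V d δ (p + 1)))
    (hΔ2 : Function.Surjective (Lap V d δ (p + 2)))
    (W : Submodule ℝ (V p))
    (hW : W ≤ LinearMap.ker (d p) ⊓ LinearMap.ker (δ p))
    (hWdisj : W ⊓ LinearMap.range (deltaTo V δ p) = ⊥)
    (hWspan : W ⊔ LinearMap.range (deltaTo V δ p) = LinearMap.ker (δ p)) :
    Nonempty (
      ((↥(LinearMap.ker (δ p) ⊓ LinearMap.ker (Lap V d δ p)) ⧸
          (Submodule.comap
            (LinearMap.ker (δ p) ⊓ LinearMap.ker (Lap V d δ p)).subtype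
            (Submodule.map (deltaTo V δ p) (LinearMap.ker (Lap V d δ (p + 1))))))
        ≃ₗ[ℝ]
      (W × (↥(LinearMap.ker (δ (p + 1))) ⧸
          (Submodule.comap (LinearMap.ker (δ (p + 1))).subtype
            (LinearMap.range (deltaTo V δ (p + 1)))))))) := by
  classical
  set Kδ : Submodule ℝ (V p) := LinearMap.ker (δ p) with hKδdef
  set R : Submodule ℝ (V p) := LinearMap.range (deltaTo V δ p) with hRdef
  set K : Submodule ℝ (V p) := Kδ ⊓ LinearMap.ker (Lap V d δ p) with hKdef
  set K1 : Submodule ℝ (V (p + 1)) := LinearMap.ker (δ (p + 1)) with hK1def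
  set N : Submodule ℝ ↥K1 :=
    Submodule.comap K1.subtype (LinearMap.range (deltaTo V δ (p + 1))) with hNdef
  set M : Submodule ℝ ↥K :=
    Submodule.comap K.subtype
      (Submodule.map (deltaTo V δ p) (LinearMap.ker (Lap V d δ (p + 1)))) with hMdef
  -- basic membership facts
  have hRle : R ≤ Kδ := by
    rintro x ⟨y, rfl⟩
    exact LinearMap.mem_ker.mpr (delta_deltaTo hδ p y)
  have hWleδ : W ≤ Kδ := fun x hx => (hW hx).2
  -- complementarity inside Kδ
  set W' : Submodule ℝ ↥Kδ := Submodule.comap Kδ.subtype W with hW'def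
  set R' : Submodule ℝ ↥Kδ := Submodule.comap Kδ.subtype R with hR'def
  have hcompl : IsCompl W' R' := by
    constructor
    · rw [disjoint_iff, eq_bot_iff]
      rintro x ⟨hx1, hx2⟩
      have hx : (x : V p) ∈ W ⊓ R := ⟨hx1, hx2⟩
      rw [hWdisj] at hx
      exact (Submodule.mem_bot _).mpr (Subtype.ext ((Submodule.mem_bot _).mp hx))
    · rw [codisjoint_iff, eq_top_iff]
      rintro x -
      have hx : (x : V p) ∈ W ⊔ R := by rw [hWspan]; exact x.2
      obtain ⟨w, hw, r, hr, hwr⟩ := Submodule.mem_sup.mp hx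
      exact Submodule.mem_sup.mpr
        ⟨⟨w, hWleδ hw⟩, hw, ⟨r, hRle hr⟩, hr, Subtype.ext hwr⟩
  set projW : ↥K →ₗ[ℝ] ↥W :=
    ((Submodule.comapSubtypeEquivOfLe hWleδ).toLinearMap.comp
      ((Submodule.projectionOnto W' R' hcompl).comp
        (Submodule.inclusion (inf_le_left : K ≤ Kδ)))) with hprojWdef
  have projW_apply : ∀ x : ↥K, projW x =
      (Submodule.comapSubtypeEquivOfLe hWleδ)
        (Submodule.projectionOnto W' R' hcompl
          (Submodule.inclusion (inf_le_left : K ≤ Kδ) x)) := fun _ => rfl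
  have projW_spec : ∀ (x : ↥K) (w : V p), ∀ hw : w ∈ W, ∀ r : V p, r ∈ R →
      (x : V p) = w + r → (projW x : V p) = w := by
    intro x w hw r hr hxr
    have hsum : Submodule.inclusion (inf_le_left : K ≤ Kδ) x =
        (⟨w, hWleδ hw⟩ : ↥Kδ) + ⟨r, hRle hr⟩ := Subtype.ext hxr
    have e1 : Submodule.projectionOnto W' R' hcompl ⟨w, hWleδ hw⟩ =
        ⟨⟨w, hWleδ hw⟩, hw⟩ :=
      Submodule.projectionOnto_apply_left hcompl ⟨⟨w, hWleδ hw⟩, hw⟩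
    rw [projW_apply, hsum, map_add, e1,
      Submodule.projectionOnto_apply_of_mem_right hcompl hr, add_zero,
      Submodule.comapSubtypeEquivOfLe_apply_coe]
  have projW_zero_iff : ∀ x : ↥K, projW x = 0 ↔ (x : V p) ∈ R := by
    intro x
    rw [projW_apply, LinearEquiv.map_eq_zero_iff,
      Submodule.projectionOnto_apply_eq_zero_iff]
    exact Iff.rfl
  -- the d-map into ker δ (p+1)
  have hDmem : ∀ x : ↥K, d p (x : V p) ∈ K1 := by
    intro x
    have h1 : δ p (x : V p) = 0 := (Submodule.mem_inf.mp x.2).1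
    have h2 : Lap V d δ p (x : V p) = 0 := (Submodule.mem_inf.mp x.2).2
    exact LinearMap.mem_ker.mpr ((lap_eq_zero_iff_of_delta p _ h1).mp h2)
  set D : ↥K →ₗ[ℝ] ↥K1 :=
    LinearMap.codRestrict K1 ((d p).comp K.subtype) hDmem with hDdef
  have D_coe : ∀ x : ↥K, (D x : V (p + 1)) = d p (x : V p) := fun _ => rfl
  set Φ : ↥K →ₗ[ℝ] ↥W × (↥K1 ⧸ N) := LinearMap.prod projW (N.mkQ.comp D) with hΦdef
  have Φ_apply : ∀ x : ↥K, Φ x = (projW x, N.mkQ (D x)) := fun _ => rfl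
  -- surjectivity of Lap in degree p+1+1
  have hΔ2' : Function.Surjective (Lap V d δ (p + 1 + 1)) := by
    intro m
    obtain ⟨n, hn⟩ := hΔ2 (lcast V (by omega : p + 1 + 1 = p + 2) m)
    refine ⟨lcast V (by omega : p + 2 = p + 1 + 1) n, ?_⟩
    rw [← lcast_lap, hn, lcast_lcast, lcast_refl]
  -- surjectivity of Φ
  have hsurj : Function.Surjective Φ := by
    rintro ⟨w, q⟩
    obtain ⟨c, rfl⟩ := N.mkQ_surjective q
    obtain ⟨y, hy⟩ := hΔ1 (c : V (p + 1))
    have hδc : δ (p + 1) (c : V (p + 1)) = 0 := c.2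
    have hdw : d p (w : V p) = 0 := (hW w.2).1
    have hxδ : δ p ((w : V p) + deltaTo V δ p y) = 0 := by
      rw [map_add, delta_deltaTo hδ p y, add_zero]
      exact (hW w.2).2
    have hdx : d p ((w : V p) + deltaTo V δ p y) = dTo V d (p + 1) (δ (p + 1) y) := by
      rw [map_add, hdw, zero_add, d_deltaTo]
    have hδdto : δ (p + 1) (dTo V d (p + 1) (δ (p + 1) y)) = 0 := by
      have h := congrArg (δ (p + 1)) hy
      rw [lap_apply', map_add, delta_deltaTo hδ (p + 1) (d (p + 1) y), add_zero] at h
      rw [h, hδc]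
    have hxlap : ((w : V p) + deltaTo V δ p y) ∈ LinearMap.ker (Lap V d δ p) := by
      rw [LinearMap.mem_ker, lap_eq_zero_iff_of_delta p _ hxδ, hdx]
      exact hδdto
    have hxK : ((w : V p) + deltaTo V δ p y) ∈ K :=
      Submodule.mem_inf.mpr ⟨LinearMap.mem_ker.mpr hxδ, hxlap⟩
    refine ⟨⟨_, hxK⟩, ?_⟩
    rw [Φ_apply]
    have h1 : projW ⟨_, hxK⟩ = w :=
      Subtype.ext (projW_spec _ _ w.2 _ ⟨y, rfl⟩ rfl)
    have h2 : N.mkQ (D ⟨_, hxK⟩) = N.mkQ c := by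
      rw [Submodule.mkQ_apply, Submodule.mkQ_apply, Submodule.Quotient.eq]
      refine Submodule.mem_comap.mpr ⟨-(d (p + 1) y), ?_⟩
      rw [map_neg, Submodule.subtype_apply]
      have hcoe : ((D ⟨_, hxK⟩ - c : ↥K1) : V (p + 1)) =
          dTo V d (p + 1) (δ (p + 1) y) - (c : V (p + 1)) := by
        rw [AddSubgroupClass.coe_sub, D_coe, hdx]
      rw [hcoe, ← hy, lap_apply']
      abel
    rw [h1, h2]
  -- kernel of Φ
  have hker : LinearMap.ker Φ = M := by
    ext x
    rw [LinearMap.mem_ker, Φ_apply, Prod.mk_eq_zero]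
    constructor
    · rintro ⟨h1, h2⟩
      obtain ⟨y₀, hy₀⟩ := (projW_zero_iff x).mp h1
      have h2' : D x ∈ N := (Submodule.Quotient.mk_eq_zero N).mp
        (by rwa [Submodule.mkQ_apply] at h2)
      obtain ⟨z, hz⟩ := Submodule.mem_comap.mp h2'
      rw [Submodule.subtype_apply, D_coe] at hz
      -- Lap (p+1) y₀ = deltaTo (p+1) (z + d (p+1) y₀)
      have hlapy : Lap V d δ (p + 1) y₀ = deltaTo V δ (p + 1) (z + d (p + 1) y₀) := by
        rw [lap_apply', map_add]
        congr 1
        rw [← d_deltaTo, hy₀, ← hz]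
      obtain ⟨n, hn⟩ := hΔ2' (z + d (p + 1) y₀)
      have hy'lap : Lap V d δ (p + 1) (y₀ - deltaTo V δ (p + 1) n) = 0 := by
        rw [map_sub, hlapy, ← deltaTo_lap_comm hδ (p + 1) n, hn, sub_self]
      have hy'val : deltaTo V δ p (y₀ - deltaTo V δ (p + 1) n) = (x : V p) := by
        rw [map_sub, hy₀, deltaTo_deltaTo hδ p n, sub_zero]
      exact Submodule.mem_comap.mpr
        ⟨y₀ - deltaTo V δ (p + 1) n, LinearMap.mem_ker.mpr hy'lap, hy'val⟩
    · intro hx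
      obtain ⟨y, hyker, hyeq⟩ := Submodule.mem_comap.mp hx
      rw [Submodule.subtype_apply] at hyeq
      constructor
      · exact (projW_zero_iff x).mpr ⟨y, hyeq⟩
      · rw [Submodule.mkQ_apply, Submodule.Quotient.mk_eq_zero N]
        refine Submodule.mem_comap.mpr ⟨-(d (p + 1) y), ?_⟩
        rw [map_neg, Submodule.subtype_apply, D_coe, ← hyeq, d_deltaTo]
        have h := LinearMap.mem_ker.mp hyker
        rw [lap_apply'] at h
        have := eq_neg_of_add_eq_zero_left h
        rw [this]
    -- done
  exact ⟨(Submodule.quotEquivOfEq M (LinearMap.ker Φ) hker.symm).trans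
    (Φ.quotKerEquivOfSurjective hsurj)⟩
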